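/- Let A ⊆ B be a ring extension and let J be an ideal of B that is contained in A (so J is a common ideal of A and B). If A/J is perinormal in B/J, then A is perinormal in B. -/

import Mathlib

/-- A ring homomorphism `f : A →+* B` satisfies going-down: whenever `p₁ ⊆ p₂` are primes of `A`
and `Q₂` is a prime of `B` contracting to `p₂`, there is a prime `Q₁ ⊆ Q₂` of `B`
contracting to `p₁`. -/
def GoingDownHom {A B : Type*} [CommRing A] [CommRing B] (f : A →+* B) : Prop :=
  ∀ (p₁ p₂ : Ideal A), p₁.IsPrime → p₂.IsPrime → p₁ ≤ p₂ →
    ∀ Q₂ : Ideal B, Q₂.IsPrime → Q₂.comap f = p₂ →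
      ∃ Q₁ : Ideal B, Q₁.IsPrime ∧ Q₁ ≤ Q₂ ∧ Q₁.comap f = p₁

/-- The canonical map from the localization of a subring `A ⊆ B` at a submonoid `W ⊆ A`
to the localization of `B` at the image of `W` in `B`. -/
noncomputable def locMap {B : Type*} [CommRing B] (A : Subring B) (W : Submonoid A) :
    Localization W →+* Localization (W.map A.subtype) :=
  IsLocalization.lift (M := W) (S := Localization W)
    (g := (algebraMap B (Localization (W.map A.subtype))).comp A.subtype)
    (fun y => IsLocalization.map_units (M := W.map A.subtype) (Localization (W.map A.subtype))
      ⟨A.subtype y, ⟨y, y.2, rfl⟩⟩)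

/-- A subring `A ⊆ B` is perinormal in `B` at the prime `p` of `A`:  the localization `A_p`
(i.e. the image of `Localization.AtPrime p` in `B_{A∖p}`) is the only local ring `T` between
`A_p` and `B_{A∖p}` whose maximal ideal contracts to `pA_p` and which satisfies going-down
over `A_p`. -/
def PeriAt {B : Type*} [CommRing B] (A : Subring B) (p : Ideal A) (hp : p.IsPrime) : Prop :=
  haveI := hp
  ∀ (T : Subring (Localization (p.primeCompl.map A.subtype)))
    (hT : (locMap A p.primeCompl).range ≤ T),
    IsLocalRing T →
    (∀ M : Ideal T, M.IsMaximal →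
      M.comap ((locMap A p.primeCompl).codRestrict T (fun x => hT ⟨x, rfl⟩)) =
        IsLocalRing.maximalIdeal (Localization.AtPrime p)) →
    GoingDownHom ((locMap A p.primeCompl).codRestrict T (fun x => hT ⟨x, rfl⟩)) →
    T = (locMap A p.primeCompl).range

/-- A subring `A` of `B` is perinormal in `B`. -/
def PerinormalIn {B : Type*} [CommRing B] (A : Subring B) : Prop :=
  ∀ (p : Ideal A) (hp : p.IsPrime), PeriAt A p hp

/-- An integral domain `R` is perinormal:  every local overring of `R`
(local ring between `R` and its fraction field) satisfying going-down over `R`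
is a localization of `R` at a prime ideal. -/
def PerinormalDomain (R : Type*) [CommRing R] [IsDomain R] : Prop :=
  ∀ (T : Subring (FractionRing R)) (hT : (algebraMap R (FractionRing R)).range ≤ T),
    IsLocalRing T →
    GoingDownHom ((algebraMap R (FractionRing R)).codRestrict T (fun x => hT ⟨x, rfl⟩)) →
    ∃ p : Ideal R, p.IsPrime ∧
      (T : Set (FractionRing R)) =
        {x | ∃ r s : R, s ∉ p ∧
          x * algebraMap R (FractionRing R) s = algebraMap R (FractionRing R) r}

/-- A subring `A ⊆ B` is apparently fragile in `B`: for every ring `C` with `A ⊊ C ⊆ B`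
there are a minimal prime `p` of `A` and distinct primes `P, Q` of `C` contracting to `p`. -/
def ApparentlyFragile {B : Type*} [CommRing B] (A : Subring B) : Prop :=
  ∀ (C : Subring B) (hAC : A ≤ C), A ≠ C →
    ∃ p ∈ minimalPrimes A, ∃ P Q : Ideal C, P.IsPrime ∧ Q.IsPrime ∧ P ≠ Q ∧
      P.comap (Subring.inclusion hAC) = p ∧ Q.comap (Subring.inclusion hAC) = p

/-- A subring `A ⊆ B` is fragile in `B`: for every prime `P` of `A`, the extension
`A_P ⊆ B_{A∖P}` is apparently fragile. -/
def Fragile {B : Type*} [CommRing B] (A : Subring B) : Prop :=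
  ∀ (P : Ideal A) (hP : P.IsPrime),
    haveI := hP
    ApparentlyFragile (locMap A P.primeCompl).range

/-- A subring `A ⊆ B` is globally fragile in `B`: for every multiplicative subset `W` of `A`,
the extension `A_W ⊆ B_W` is apparently fragile. -/
def GloballyFragile {B : Type*} [CommRing B] (A : Subring B) : Prop :=
  ∀ W : Submonoid A, ApparentlyFragile (locMap A W).range

/-- An integral domain `S` is a generalized Krull domain: (i) `S` is the intersection of its
localizations at height-one primes (inside its fraction field), (ii) every nonzero element lies
in only finitely many height-one primes, and (iii) the localization at every height-one prime
is a valuation ring. -/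
def IsGenKrull (S : Type*) [CommRing S] [IsDomain S] : Prop :=
  (∀ x : FractionRing S,
      (∀ (p : Ideal S) (hp : p.IsPrime), Order.height (⟨p, hp⟩ : PrimeSpectrum S) = 1 →
        ∃ a s : S, s ∉ p ∧ x * algebraMap S (FractionRing S) s = algebraMap S (FractionRing S) a) →
      ∃ r : S, algebraMap S (FractionRing S) r = x) ∧
  (∀ s : S, s ≠ 0 →
      {p : Ideal S | ∃ hp : p.IsPrime, Order.height (⟨p, hp⟩ : PrimeSpectrum S) = 1 ∧ s ∈ p}.Finite) ∧
  (∀ (p : Ideal S) (hp : p.IsPrime), Order.height (⟨p, hp⟩ : PrimeSpectrum S) = 1 →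
      haveI := hp
      ValuationRing (Localization.AtPrime p))

/-- A prime ideal `Q` has height one. -/
def HeightOne {S : Type*} [CommRing S] (Q : Ideal S) : Prop :=
  ∃ hQ : Q.IsPrime, Order.height (⟨Q, hQ⟩ : PrimeSpectrum S) = 1

section Aux

variable {B : Type*} [CommRing B] (A : Subring B) (W : Submonoid A)

lemma le_comap_subtype' : W ≤ (W.map A.subtype).comap A.subtype :=
  fun w hw => Submonoid.mem_comap.mpr ⟨w, hw, rfl⟩

lemma locMap_eq :
    locMap A W = IsLocalization.map (M := W) (T := W.map A.subtype) (S := Localization W)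
      (Localization (W.map A.subtype)) A.subtype (le_comap_subtype' A W) := rfl

lemma locMap_mk' (a : A) (w : W) :
    locMap A W (IsLocalization.mk' (Localization W) a w) =
      IsLocalization.mk' (M := W.map A.subtype) (Localization (W.map A.subtype)) (a : B)
        ⟨(w : A), le_comap_subtype' A W w.2⟩ := by
  rw [locMap_eq]
  exact IsLocalization.map_mk' (le_comap_subtype' A W) a w

lemma locMap_range_iff (x : Localization (W.map A.subtype)) :
    x ∈ (locMap A W).range ↔ ∃ (a : A) (w : W),
      IsLocalization.mk' (M := W.map A.subtype) (Localization (W.map A.subtype)) (a : B)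
        ⟨(w : A), le_comap_subtype' A W w.2⟩ = x := by
  constructor
  · rintro ⟨y, rfl⟩
    obtain ⟨⟨a, w⟩, rfl⟩ := IsLocalization.mk'_surjective W y
    exact ⟨a, w, (locMap_mk' A W a w).symm⟩
  · rintro ⟨a, w, rfl⟩
    exact ⟨_, locMap_mk' A W a w⟩

end Aux

set_option maxHeartbeats 1600000

/-- Let `A ⊆ B` be a ring extension and `J` an ideal of `B` contained in `A`
(so `J` is a common ideal of `A` and `B`).  If `A/J` is perinormal in `B/J`,
then `A` is perinormal in `B`. -/
theorem perinormalIn_of_perinormalIn_quotient {B : Type*} [CommRing B]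
    (A : Subring B) (J : Ideal B) (hJA : (J : Set B) ⊆ A)
    (h : PerinormalIn (A.map (Ideal.Quotient.mk J))) :
    PerinormalIn A := by
  intro p hp
  haveI := hp
  by_cases hJp : J.comap A.subtype ≤ p
  · -- J ⊆ p : transfer to the quotient
    -- abbreviations
    set Abar : Subring (B ⧸ J) := A.map (Ideal.Quotient.mk J) with hAbar
    let ρ : A →+* Abar :=
      ((Ideal.Quotient.mk J).comp A.subtype).codRestrict Abar
        (fun a => ⟨(a : B), a.2, rfl⟩)
    have hρsurj : Function.Surjective ρ := by
      rintro ⟨x, a, ha, rfl⟩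
      exact ⟨⟨a, ha⟩, rfl⟩
    have hkerρ : RingHom.ker ρ ≤ p := by
      intro a ha
      apply hJp
      have : (ρ a : B ⧸ J) = 0 := congrArg Subtype.val (RingHom.mem_ker.mp ha)
      exact Ideal.mem_comap.mpr (Ideal.Quotient.eq_zero_iff_mem.mp this)
    set pbar : Ideal Abar := p.map ρ with hpbardef
    haveI hpbar : pbar.IsPrime := Ideal.map_isPrime_of_surjective hρsurj hkerρ
    have hF : ∀ a : A, ρ a ∈ pbar ↔ a ∈ p := by
      intro a
      constructor
      · intro hmem
        have := Ideal.comap_map_of_surjective ρ hρsurj p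
        have h2 : a ∈ p ⊔ Ideal.comap ρ ⊥ := by
          rw [← this]; exact Ideal.mem_comap.mpr hmem
        rwa [← RingHom.ker_eq_comap_bot, sup_eq_left.mpr hkerρ] at h2
      · intro hmem
        exact Ideal.mem_map_of_mem ρ hmem
    have hWle : p.primeCompl ≤ pbar.primeCompl.comap ρ := by
      intro w hw
      exact fun hmem => hw ((hF w).mp hmem)
    set ψ : Localization p.primeCompl →+* Localization pbar.primeCompl :=
      IsLocalization.map (Localization pbar.primeCompl) ρ hWle with hψdef
    have hφle : p.primeCompl.map A.subtype ≤
        (pbar.primeCompl.map Abar.subtype).comap (Ideal.Quotient.mk J) := by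
      rintro _ ⟨w, hw, rfl⟩
      exact Submonoid.mem_comap.mpr ⟨ρ w, hWle hw, rfl⟩
    set φ : Localization (p.primeCompl.map A.subtype) →+*
        Localization (pbar.primeCompl.map Abar.subtype) :=
      IsLocalization.map (Localization (pbar.primeCompl.map Abar.subtype))
        (Ideal.Quotient.mk J) hφle with hφdef
    -- the commuting square
    have hsq : φ.comp (locMap A p.primeCompl) = (locMap Abar pbar.primeCompl).comp ψ := by
      rw [locMap_eq, locMap_eq]
      apply IsLocalization.ringHom_ext p.primeCompl
      ext a
      simp only [RingHom.comp_apply, hφdef, hψdef, IsLocalization.map_eq]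
      rfl
    have hsq' : ∀ z, φ (locMap A p.primeCompl z) = locMap Abar pbar.primeCompl (ψ z) :=
      fun z => RingHom.congr_fun hsq z
    -- surjectivity of ψ
    have hψsurj : Function.Surjective ψ := by
      intro z
      obtain ⟨⟨abar, sbar⟩, rfl⟩ := IsLocalization.mk'_surjective pbar.primeCompl z
      obtain ⟨a, rfl⟩ := hρsurj abar
      obtain ⟨s, hs⟩ := hρsurj (sbar : Abar)
      have hsp : s ∈ p.primeCompl := fun hsmem => sbar.2 (by rw [← hs]; exact (hF s).mpr hsmem)
      refine ⟨IsLocalization.mk' _ a ⟨s, hsp⟩, ?_⟩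
      rw [hψdef, IsLocalization.map_mk']
      congr 1
      exact Subtype.ext hs
    -- ψ reflects and preserves units
    have hψunit : ∀ y : Localization p.primeCompl, IsUnit (ψ y) ↔ IsUnit y := by
      intro y
      obtain ⟨⟨a, s⟩, rfl⟩ := IsLocalization.mk'_surjective p.primeCompl y
      rw [hψdef, IsLocalization.map_mk',
        IsLocalization.AtPrime.isUnit_mk'_iff (Localization pbar.primeCompl) pbar,
        IsLocalization.AtPrime.isUnit_mk'_iff (Localization p.primeCompl) p]
      exact not_congr (hF a)
    have hcomapmax : (IsLocalRing.maximalIdeal (Localization.AtPrime pbar)).comap ψ =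
        IsLocalRing.maximalIdeal (Localization.AtPrime p) := by
      ext y
      simp only [Ideal.mem_comap, IsLocalRing.mem_maximalIdeal, mem_nonunits_iff]
      exact not_congr (hψunit y)
    -- kernel description of φ
    have hker : ∀ x : Localization (p.primeCompl.map A.subtype), φ x = 0 →
        ∃ z : Localization p.primeCompl, ψ z = 0 ∧ locMap A p.primeCompl z = x := by
      intro x hx0
      obtain ⟨⟨b, w⟩, rfl⟩ := IsLocalization.mk'_surjective (p.primeCompl.map A.subtype) x
      rw [hφdef, IsLocalization.map_mk', IsLocalization.mk'_eq_zero_iff] at hx0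
      obtain ⟨m, hm⟩ := hx0
      obtain ⟨vbar, hvbar, hvm⟩ := m.2
      obtain ⟨v, rfl⟩ := hρsurj vbar
      have hv : v ∈ p.primeCompl := fun hvmem => hvbar ((hF v).mpr hvmem)
      have hvb : (v : B) * b ∈ J := by
        apply Ideal.Quotient.eq_zero_iff_mem.mp
        rw [map_mul]
        calc Ideal.Quotient.mk J (v : B) * Ideal.Quotient.mk J b
            = (m : B ⧸ J) * Ideal.Quotient.mk J b := by rw [← hvm]; rfl
          _ = 0 := hm
      obtain ⟨w', hw', hww⟩ := w.2
      set aA : A := ⟨(v : B) * b, hJA hvb⟩ with haA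
      refine ⟨IsLocalization.mk' _ aA ⟨v * w', Submonoid.mul_mem _ hv hw'⟩, ?_, ?_⟩
      · have hρa : ρ aA = 0 := by
          apply Subtype.ext
          exact Ideal.Quotient.eq_zero_iff_mem.mpr hvb
        rw [hψdef, IsLocalization.map_mk', hρa, IsLocalization.mk'_zero]
      · rw [locMap_mk']
        have h1 : ((⟨(((v * w' : A)) : A), le_comap_subtype' A p.primeCompl
              (Submonoid.mul_mem _ hv hw')⟩ : (p.primeCompl.map A.subtype)))
            = w * ⟨(v : B), ⟨v, hv, rfl⟩⟩ := by
          apply Subtype.ext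
          show ((v * w' : A) : B) = (w : B) * (v : B)
          rw [← hww]
          have hwc : A.subtype w' = (w' : B) := rfl
          rw [hwc]
          push_cast
          ring
        rw [h1]
        have h2 : (aA : B) = b * (v : B) := by rw [haA]; push_cast; ring
        rw [h2]
        exact IsLocalization.mk'_cancel b w ⟨(v : B), ⟨v, hv, rfl⟩⟩
    -- now the perinormality transfer
    intro T hT hTloc hTmax hTgd
    haveI := hTloc
    set Tbar : Subring (Localization (pbar.primeCompl.map Abar.subtype)) := T.map φ with hTbardef
    let π : T →+* Tbar := (φ.comp T.subtype).codRestrict Tbar (fun t => ⟨(t : _), t.2, rfl⟩)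
    have hπsurj : Function.Surjective π := by
      rintro ⟨x, t, ht, rfl⟩
      exact ⟨⟨t, ht⟩, rfl⟩
    have hπval : ∀ t : T, (π t : Localization (pbar.primeCompl.map Abar.subtype)) = φ (t : _) :=
      fun t => rfl
    have hrangebar : (locMap Abar pbar.primeCompl).range =
        ((locMap A p.primeCompl).range : Subring _).map φ := by
      ext x
      constructor
      · rintro ⟨y, rfl⟩
        obtain ⟨z, rfl⟩ := hψsurj y
        exact ⟨locMap A p.primeCompl z, ⟨z, rfl⟩, (hsq' z)⟩
      · rintro ⟨_, ⟨z, rfl⟩, rfl⟩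
        exact ⟨ψ z, (hsq' z).symm⟩
    have hTbar_le : (locMap Abar pbar.primeCompl).range ≤ Tbar := by
      rw [hrangebar]
      rintro _ ⟨x, hx, rfl⟩
      exact ⟨x, hT hx, rfl⟩
    -- the two codomain-restricted maps
    set f : Localization.AtPrime p →+* T :=
      (locMap A p.primeCompl).codRestrict T (fun x => hT ⟨x, rfl⟩) with hfdef
    set fbar : Localization.AtPrime pbar →+* Tbar :=
      (locMap Abar pbar.primeCompl).codRestrict Tbar (fun x => hTbar_le ⟨x, rfl⟩) with hfbardef
    have hsqT : π.comp f = fbar.comp ψ :=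
      RingHom.ext fun z => Subtype.ext (hsq' z)
    have hkerπ : ∀ t : T, π t = 0 →
        ∃ z, ψ z = 0 ∧ f z = t := by
      intro t ht
      have : φ (t : _) = 0 := by rw [← hπval t, ht]; rfl
      obtain ⟨z, hz0, hzt⟩ := hker _ this
      exact ⟨z, hz0, Subtype.ext hzt⟩
    haveI : Nontrivial (Localization (pbar.primeCompl.map Abar.subtype)) := by
      refine nontrivial_of_ne 1 0 (fun h10 => ?_)
      have h1 : (algebraMap (B ⧸ J) (Localization (pbar.primeCompl.map Abar.subtype))) 1 = 0 := by
        rw [map_one]; exact h10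
      rw [IsLocalization.map_eq_zero_iff (pbar.primeCompl.map Abar.subtype)] at h1
      obtain ⟨m, hm⟩ := h1
      obtain ⟨vbar, hvbar, hvm⟩ := m.2
      apply hvbar
      have hvm' : (vbar : B ⧸ J) = (m : B ⧸ J) := hvm
      have : (vbar : B ⧸ J) = 0 := by rw [hvm']; simpa using hm
      have hv0 : vbar = 0 := Subtype.ext this
      rw [hv0]
      exact pbar.zero_mem
    haveI : Nontrivial Tbar :=
      ⟨1, 0, fun h => one_ne_zero (congrArg Subtype.val h)⟩
    have hTbarloc : IsLocalRing Tbar := IsLocalRing.of_surjective' π hπsurj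
    -- maximal ideal condition downstairs
    have hmaxbar : ∀ M : Ideal Tbar, M.IsMaximal →
        M.comap ((locMap Abar pbar.primeCompl).codRestrict Tbar
          (fun x => hTbar_le ⟨x, rfl⟩)) =
          IsLocalRing.maximalIdeal (Localization.AtPrime pbar) := by
      intro Mbar hMbar
      haveI := hMbar
      have hM : (Mbar.comap π).IsMaximal := Ideal.comap_isMaximal_of_surjective π hπsurj
      have h1 := hTmax _ hM
      apply Ideal.comap_injective_of_surjective ψ hψsurj
      rw [hcomapmax, Ideal.comap_comap, ← hsqT, ← Ideal.comap_comap]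
      exact h1
    -- going-down downstairs
    have hgdbar : GoingDownHom ((locMap Abar pbar.primeCompl).codRestrict Tbar
        (fun x => hTbar_le ⟨x, rfl⟩)) := by
      intro q1 q2 hq1 hq2 hle Q2bar hQ2bar hc2
      haveI := hq1; haveI := hq2; haveI := hQ2bar
      have hC2 : (Q2bar.comap π).comap f = q2.comap ψ := by
        rw [Ideal.comap_comap, hsqT, ← Ideal.comap_comap, hc2]
      obtain ⟨Q1, hQ1, hQ12, hc1⟩ :=
        hTgd (q1.comap ψ) (q2.comap ψ) (Ideal.IsPrime.comap ψ) (Ideal.IsPrime.comap ψ)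
          (Ideal.comap_mono hle) (Q2bar.comap π) (Ideal.IsPrime.comap π) hC2
      haveI := hQ1
      have hker1 : RingHom.ker π ≤ Q1 := by
        intro t ht
        obtain ⟨z, hz0, hzt⟩ := hkerπ t (RingHom.mem_ker.mp ht)
        have hz1 : z ∈ q1.comap ψ := by
          rw [Ideal.mem_comap, hz0]; exact q1.zero_mem
        rw [← hc1] at hz1
        rw [← hzt]
        exact hz1
      refine ⟨Q1.map π, Ideal.map_isPrime_of_surjective hπsurj hker1,
        Ideal.map_le_iff_le_comap.mpr hQ12, ?_⟩
      apply Ideal.comap_injective_of_surjective ψ hψsurj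
      rw [Ideal.comap_comap, ← hsqT, ← Ideal.comap_comap]
      have : (Q1.map π).comap π = Q1 := by
        rw [Ideal.comap_map_of_surjective π hπsurj, ← RingHom.ker_eq_comap_bot,
          sup_eq_left.mpr hker1]
      rw [this, hc1]
    -- apply the hypothesis
    have hTbar := h pbar hpbar Tbar hTbar_le hTbarloc hmaxbar hgdbar
    -- pull back the conclusion
    apply le_antisymm _ hT
    intro t ht
    have hmem : φ t ∈ Tbar := ⟨t, ht, rfl⟩
    rw [hTbar, hrangebar] at hmem
    obtain ⟨r, ⟨y, rfl⟩, hrt⟩ := hmem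
    have hφ0 : φ (t - locMap A p.primeCompl y) = 0 := by
      rw [map_sub, hrt, sub_self]
    obtain ⟨z, _, hzr⟩ := hker _ hφ0
    refine ⟨y + z, ?_⟩
    rw [map_add, hzr]
    ring
  · -- J ⊄ p : the range of locMap is everything
    obtain ⟨j, hjJ, hjp⟩ := SetLike.not_le_iff_exists.mp hJp
    intro T hT _ _ _
    have htop : (locMap A p.primeCompl).range = ⊤ := by
      rw [eq_top_iff]
      rintro x -
      rw [locMap_range_iff]
      obtain ⟨⟨b, w⟩, rfl⟩ := IsLocalization.mk'_surjective (p.primeCompl.map A.subtype) x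
      obtain ⟨w', hw', hww⟩ := w.2
      have hjb : b * (j : B) ∈ J := J.mul_mem_left b (Ideal.mem_comap.mp hjJ)
      refine ⟨⟨b * (j : B), hJA hjb⟩, ⟨w' * j, Submonoid.mul_mem _ hw' hjp⟩, ?_⟩
      have h1 : ((⟨(((w' * j : A)) : A), le_comap_subtype' A p.primeCompl
            (Submonoid.mul_mem _ hw' hjp)⟩ : (p.primeCompl.map A.subtype)))
          = w * ⟨(j : B), ⟨j, hjp, rfl⟩⟩ := by
        apply Subtype.ext
        show ((w' * j : A) : B) = (w : B) * (j : B)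
        rw [← hww]
        have hwc : A.subtype w' = (w' : B) := rfl
        rw [hwc]
        push_cast
        ring
      rw [h1]
      exact IsLocalization.mk'_cancel b w ⟨(j : B), ⟨j, hjp, rfl⟩⟩
    rw [htop]
    rw [eq_top_iff] at htop ⊢
    exact le_trans htop hT
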